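/- Let H, V be real Hilbert spaces, A : H → V bounded linear, b ∈ V, L x = A x + b. Suppose x* ∈ H satisfies L x* = 0 (attainable exact solution) and is the unique solution of L x = 0 in H. For a sequence δ_n → 0 choose ε_n → 0 with δ_n²/ε_n → 0, and let b_n ∈ V with ‖b_n − b‖ ≤ c δ_n; let x_n be the unique minimizer of J_n(x) = (1/2)‖A x + b_n‖² + (ε_n/2)‖x‖². Then x_n → x* strongly in H. -/

import Mathlib

open Filter Topology

set_option maxHeartbeats 1000000 in
/-- Convergence of Tikhonov regularized solutions with noisy data to the exact
attainable solution, under `δₙ → 0`, `εₙ → 0`, `δₙ²/εₙ → 0`. -/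
theorem stmt_3
    {H V : Type*} [NormedAddCommGroup H] [InnerProductSpace ℝ H] [CompleteSpace H]
    [NormedAddCommGroup V] [InnerProductSpace ℝ V] [CompleteSpace V]
    (A : H →L[ℝ] V) (b : V) (L : H → V) (hL : ∀ x, L x = A x + b)
    (xstar : H) (hx : L xstar = 0) (huniq : ∀ y : H, L y = 0 → y = xstar)
    (δ ε : ℕ → ℝ) (hδpos : ∀ n, 0 ≤ δ n) (hεpos : ∀ n, 0 < ε n)
    (hδ : Tendsto δ atTop (𝓝 0)) (hε : Tendsto ε atTop (𝓝 0))
    (hδε : Tendsto (fun n => δ n ^ 2 / ε n) atTop (𝓝 0))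
    (c : ℝ) (hc : 0 < c)
    (bn : ℕ → V) (hbn : ∀ n, ‖bn n - b‖ ≤ c * δ n)
    (J : ℕ → H → ℝ)
    (hJ : ∀ n x, J n x = (1 / 2) * ‖A x + bn n‖ ^ 2 + (ε n / 2) * ‖x‖ ^ 2)
    (x : ℕ → H) (hmin : ∀ n, ∀ y : H, J n (x n) ≤ J n y)
    (hminuniq : ∀ n, ∀ y : H, (∀ z : H, J n y ≤ J n z) → y = x n) :
    Tendsto x atTop (𝓝 xstar) := by
  classical
  have hAx : A xstar + b = 0 := by rw [← hL]; exact hx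
  -- injectivity of A
  have hinj : ∀ k : H, A k = 0 → k = 0 := by
    intro k hk
    have : L (xstar + k) = 0 := by
      rw [hL]; simp [map_add, hk]; exact hAx
    have h2 := huniq _ this
    rw [add_comm] at h2
    exact add_eq_right.mp h2
  -- Euler-Lagrange equation
  have hEL : ∀ n (h : H),
      (inner ℝ (A (x n) + bn n) (A h) : ℝ) + ε n * inner ℝ (x n) h = 0 := by
    intro n h
    set u := A (x n) + bn n with hu
    set v := A h with hv
    set β : ℝ := (inner ℝ u v : ℝ) + ε n * inner ℝ (x n) h with hβ
    set γ : ℝ := (1/2) * ‖v‖^2 + (ε n / 2) * ‖h‖^2 with hγdef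
    have hγ : 0 ≤ γ := by
      have := (hεpos n).le
      positivity
    have key : ∀ t : ℝ, 0 ≤ β * t + γ * t^2 := by
      intro t
      have h1 := hmin n (x n + t • h)
      rw [hJ n (x n), hJ n (x n + t • h)] at h1
      have e1 : A (x n + t • h) + bn n = u + t • v := by
        rw [map_add, map_smul, hu, hv]; abel
      rw [e1] at h1
      have e2 : ‖u + t • v‖^2 = ‖u‖^2 + 2*(t*(inner ℝ u v : ℝ)) + t^2*‖v‖^2 := by
        rw [norm_add_sq_real, real_inner_smul_right, norm_smul]
        simp [mul_pow, sq_abs]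
      have e3 : ‖x n + t • h‖^2 = ‖x n‖^2 + 2*(t*(inner ℝ (x n) h : ℝ)) + t^2*‖h‖^2 := by
        rw [norm_add_sq_real, real_inner_smul_right, norm_smul]
        simp [mul_pow, sq_abs]
      rw [e2, e3] at h1
      simp only [hβ, hγdef]
      nlinarith [h1]
    -- β = 0
    clear_value β γ
    have hg : (0:ℝ) < γ + 1 := by linarith
    have h0 := key (-β/(γ+1))
    have h2 : (β * (-β/(γ+1)) + γ * (-β/(γ+1))^2) * (γ+1)^2 = -β^2 * (γ+1) + γ * β^2 := by
      field_simp
    have h1 : 0 ≤ -β^2 * (γ+1) + γ * β^2 := by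
      rw [← h2]; exact mul_nonneg h0 (by positivity)
    have h3 : -β^2 * (γ+1) + γ * β^2 = -β^2 := by ring
    have hβ2 : β^2 ≤ 0 := by linarith
    have : β = 0 := by nlinarith [sq_nonneg β]
    exact this
  -- density of range of A* A
  set T : H →L[ℝ] H := (ContinuousLinearMap.adjoint A).comp A with hT
  set K : Submodule ℝ H := LinearMap.range (T : H →ₗ[ℝ] H) with hK
  have hKtop : K.topologicalClosure = ⊤ := by
    rw [Submodule.topologicalClosure_eq_top_iff]
    rw [Submodule.eq_bot_iff]
    intro w hw
    have hTw : T w ∈ K := ⟨w, rfl⟩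
    have h0 : (inner ℝ (T w) w : ℝ) = 0 := (Submodule.mem_orthogonal K w).mp hw _ hTw
    have h1 : (inner ℝ (T w) w : ℝ) = inner ℝ (A w) (A w) := by
      rw [hT]
      exact ContinuousLinearMap.adjoint_inner_left A w (A w)
    have : ‖A w‖^2 = 0 := by
      rw [← real_inner_self_eq_norm_sq, ← h1, h0]
    have : A w = 0 := by
      have := sq_eq_zero_iff.mp this
      exact norm_eq_zero.mp this
    exact hinj w this
  -- main convergence
  rw [Metric.tendsto_atTop]
  intro θ hθ
  set η : ℝ := θ/2 with hη
  have hηpos : 0 < η := by positivity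
  -- approximate xstar by T z
  have hmem : xstar ∈ closure (K : Set H) := by
    rw [← Submodule.topologicalClosure_coe, hKtop]
    trivial
  obtain ⟨w, hwK, hwd⟩ := Metric.mem_closure_iff.mp hmem η hηpos
  obtain ⟨z, hz⟩ := hwK
  set m : ℝ := ‖A z‖ with hm
  have hr : ‖xstar - T z‖ < η := by
    rw [← hz] at hwd
    rw [← dist_eq_norm]
    exact hwd
  -- the eventual bound
  have hgtend : Tendsto (fun n => 2*c^2*(δ n^2/ε n) + 2*m^2*(ε n)) atTop (𝓝 0) := by
    have h1 := hδε.const_mul (2*c^2)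
    have h2 := hε.const_mul (2*m^2)
    have := h1.add h2
    simpa using this
  have hev : ∀ᶠ n in atTop, 2*c^2*(δ n^2/ε n) + 2*m^2*(ε n) < η^2 := by
    have := hgtend.eventually (eventually_lt_nhds (by positivity : (0:ℝ) < η^2))
    exact this
  obtain ⟨N, hN⟩ := eventually_atTop.mp hev
  refine ⟨N, fun n hn => ?_⟩
  have hsmall := hN n hn
  -- per-n estimate
  set e : H := x n - xstar with he
  set a : ℝ := ‖A e‖ with ha
  set s : ℝ := ‖e‖ with hs
  have hεn := hεpos n
  have hAxs : A xstar = -b := eq_neg_of_add_eq_zero_left hAx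
  have hEe : A (x n) + bn n = A e + (bn n - b) := by
    rw [he, map_sub, hAxs]; abel
  have hel := hEL n e
  rw [hEe] at hel
  have hxn : (inner ℝ (x n) e : ℝ) = s^2 + inner ℝ (xstar - T z) e + inner ℝ (A z) (A e) := by
    have h1 : x n = e + xstar := by rw [he]; abel
    have h2 : (inner ℝ (T z) e : ℝ) = inner ℝ (A z) (A e) := by
      rw [hT]; exact ContinuousLinearMap.adjoint_inner_left A e (A z)
    have h3 : xstar = (xstar - T z) + T z := by abel
    calc (inner ℝ (x n) e : ℝ) = inner ℝ (e + xstar) e := by rw [← h1]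
      _ = inner ℝ e e + inner ℝ xstar e := inner_add_left _ _ _
      _ = s^2 + (inner ℝ ((xstar - T z) + T z) e : ℝ) := by
          rw [real_inner_self_eq_norm_sq, ← h3, hs]
      _ = s^2 + inner ℝ (xstar - T z) e + inner ℝ (A z) (A e) := by
          rw [inner_add_left, h2]; ring
  have hexp : (inner ℝ (A e + (bn n - b)) (A e) : ℝ) = a^2 + inner ℝ (bn n - b) (A e) := by
    rw [inner_add_left, real_inner_self_eq_norm_sq, ha]
  rw [hexp, hxn] at hel
  -- bounds
  have hb1 : |(inner ℝ (bn n - b) (A e) : ℝ)| ≤ (c * δ n) * a := by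
    refine le_trans (abs_real_inner_le_norm _ _) ?_
    have := hbn n
    have ha0 : (0:ℝ) ≤ a := norm_nonneg _
    exact mul_le_mul_of_nonneg_right this ha0
  have hb2 : |(inner ℝ (xstar - T z) e : ℝ)| ≤ η * s := by
    refine le_trans (abs_real_inner_le_norm _ _) ?_
    exact mul_le_mul_of_nonneg_right hr.le (norm_nonneg _)
  have hb3 : |(inner ℝ (A z) (A e) : ℝ)| ≤ m * a := by
    refine le_trans (abs_real_inner_le_norm _ _) ?_
    exact le_of_eq rfl
  have habs1 := neg_abs_le ((inner ℝ (bn n - b) (A e) : ℝ))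
  have habs2 := neg_abs_le ((inner ℝ (xstar - T z) e : ℝ))
  have habs3 := neg_abs_le ((inner ℝ (A z) (A e) : ℝ))
  have i1 : -((c * δ n) * a) ≤ (inner ℝ (bn n - b) (A e) : ℝ) := by linarith
  have i2 : -(η * s) ≤ (inner ℝ (xstar - T z) e : ℝ) := by linarith
  have i3 : -(m * a) ≤ (inner ℝ (A z) (A e) : ℝ) := by linarith
  have j2 : ε n * (-(η * s)) ≤ ε n * inner ℝ (xstar - T z) e :=
    mul_le_mul_of_nonneg_left i2 hεn.le
  have j3 : ε n * (-(m * a)) ≤ ε n * inner ℝ (A z) (A e) :=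
    mul_le_mul_of_nonneg_left i3 hεn.le
  have hkey : a^2 + ε n * s^2 ≤ (c * δ n) * a + ε n * (η * s) + ε n * (m * a) := by
    nlinarith [hel, i1, j2, j3]
  have hq : ε n * s^2 ≤ 2*c^2*δ n^2 + 2*m^2*(ε n)^2 + ε n * η^2 := by
    nlinarith [hkey, sq_nonneg (c * δ n + ε n * m - a), sq_nonneg (c * δ n - ε n * m),
      mul_nonneg hεn.le (sq_nonneg (η - s)), hεn, hδpos n, hc.le]
  have h' := mul_lt_mul_of_pos_right hsmall hεn
  have heq : (2*c^2*(δ n^2/ε n) + 2*m^2*(ε n)) * ε n = 2*c^2*δ n^2 + 2*m^2*(ε n)^2 := by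
    field_simp
  have hfin : ε n * s^2 < ε n * (2 * η^2) := by
    rw [heq] at h'; nlinarith
  have hs2 : s^2 < 2*η^2 := lt_of_mul_lt_mul_left hfin hεn.le
  have hsθ : s < θ := by
    have h2 : s^2 < θ^2 := by rw [hη] at hs2; nlinarith [hs2, hθ]
    exact lt_of_pow_lt_pow_left₀ 2 hθ.le h2
  rw [dist_eq_norm]
  exact hsθ
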